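/- Every isometric embedding φ of W₁([0,1]) into itself with φ(δ₀) = δ₀ and φ(δ_{1/2}) = δ_{1/2} is the identity map. -/

import Mathlib

open MeasureTheory Set

noncomputable section

/-- Cumulative distribution function of a measure on `[0,1]`: `F_μ(x) = μ([0,x])`. -/
def cdfI (μ : Measure ℝ) (x : ℝ) : ℝ := (μ (Set.Icc 0 x)).toReal

/-- The Wasserstein space `W₁([0,1])`, realized as the set of Borel probability
measures on `ℝ` concentrated on `[0,1]`. -/
def P01 : Set (Measure ℝ) := {μ | IsProbabilityMeasure μ ∧ μ (Set.Icc 0 1) = 1}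

/-- Vallender's formula for the 1-Wasserstein distance on `[0,1]`. -/
def dW1I (μ ν : Measure ℝ) : ℝ := ∫ x in (0:ℝ)..1, |cdfI μ x - cdfI ν x|

/- ## basic cdf lemmas -/

lemma cdfI_nonneg (μ : Measure ℝ) (x : ℝ) : 0 ≤ cdfI μ x := ENNReal.toReal_nonneg

lemma cdfI_mono (μ : Measure ℝ) [IsFiniteMeasure μ] : Monotone (cdfI μ) := by
  intro a b hab
  exact ENNReal.toReal_mono (measure_ne_top _ _)
    (measure_mono (Icc_subset_Icc_right hab))

lemma cdfI_le_one (μ : Measure ℝ) [IsProbabilityMeasure μ] (x : ℝ) : cdfI μ x ≤ 1 := by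
  have h := prob_le_one (μ := μ) (s := Icc 0 x)
  simpa [cdfI] using ENNReal.toReal_mono (by simp) h

lemma cdfI_neg (μ : Measure ℝ) {x : ℝ} (hx : x < 0) : cdfI μ x = 0 := by
  simp [cdfI, Icc_eq_empty_of_lt hx]

lemma cdfI_one_of_ge {μ : Measure ℝ} (hμ : μ ∈ P01) {x : ℝ} (hx : (1:ℝ) ≤ x) :
    cdfI μ x = 1 := by
  obtain ⟨hP, h1⟩ := hμ
  have : IsProbabilityMeasure μ := hP
  have hle : μ (Icc 0 1) ≤ μ (Icc 0 x) := measure_mono (Icc_subset_Icc_right hx)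
  rw [h1] at hle
  have : μ (Icc 0 x) = 1 := le_antisymm (prob_le_one) hle
  simp [cdfI, this]

lemma cdfI_measurable (μ : Measure ℝ) [IsFiniteMeasure μ] : Measurable (cdfI μ) :=
  (cdfI_mono μ).measurable

lemma cdfI_abs_le_one (μ : Measure ℝ) [IsProbabilityMeasure μ] (x : ℝ) : |cdfI μ x| ≤ 1 := by
  rw [abs_of_nonneg (cdfI_nonneg μ x)]; exact cdfI_le_one μ x

/-- right continuity along `x + 1/(n+1)` -/
lemma cdfI_tendsto_right (μ : Measure ℝ) [IsProbabilityMeasure μ] (x : ℝ) :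
    Filter.Tendsto (fun n : ℕ => cdfI μ (x + 1/(n+1))) Filter.atTop (nhds (cdfI μ x)) := by
  have hset : (⋂ n : ℕ, Icc (0:ℝ) (x + 1/(n+1))) = Icc 0 x := by
    ext y
    simp only [mem_iInter, mem_Icc]
    constructor
    · rintro h
      refine ⟨(h 0).1, ?_⟩
      by_contra hy
      push_neg at hy
      obtain ⟨n, hn⟩ := exists_nat_one_div_lt (sub_pos.mpr hy)
      have := (h n).2
      linarith
    · rintro ⟨h0, h1⟩ n
      have : (0:ℝ) < 1/(n+1) := by positivity
      exact ⟨h0, by linarith⟩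
  have hanti : Antitone (fun n : ℕ => Icc (0:ℝ) (x + 1/(n+1))) := by
    intro m n hmn
    apply Icc_subset_Icc_right
    have h1 : (0:ℝ) < (m:ℝ) + 1 := by positivity
    have h2 : (m:ℝ) + 1 ≤ (n:ℝ) + 1 := by
      have : (m:ℝ) ≤ n := Nat.cast_le.mpr hmn
      linarith
    have := one_div_le_one_div_of_le h1 h2
    linarith
  have htend := MeasureTheory.tendsto_measure_iInter_atTop
    (μ := μ) (s := fun n : ℕ => Icc (0:ℝ) (x + 1/(n+1)))
    (fun n => (measurableSet_Icc).nullMeasurableSet) hanti ⟨0, measure_ne_top _ _⟩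
  rw [hset] at htend
  have := (ENNReal.tendsto_toReal (measure_ne_top μ (Icc 0 x))).comp htend
  simpa [cdfI, Function.comp_def] using this

lemma integrableOn_of_bounded_Ioc {f : ℝ → ℝ} {a b C : ℝ}
    (hf : Measurable f) (hC : ∀ x ∈ Ioc a b, |f x| ≤ C) :
    IntegrableOn f (Ioc a b) := by
  refine Integrable.mono' (integrable_const C) (hf.aestronglyMeasurable) ?_
  filter_upwards [ae_restrict_mem measurableSet_Ioc] with x hx
  simpa using hC x hx

lemma cdfI_integrableOn (μ : Measure ℝ) [IsProbabilityMeasure μ] (a b : ℝ) :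
    IntegrableOn (cdfI μ) (Ioc a b) :=
  integrableOn_of_bounded_Ioc (cdfI_measurable μ) (fun x _ => cdfI_abs_le_one μ x)

/- ## diracs and the vertical chain -/

lemma cdfI_dirac (t x : ℝ) : cdfI (Measure.dirac t) x = if t ∈ Icc 0 x then 1 else 0 := by
  rw [cdfI, Measure.dirac_apply' _ measurableSet_Icc]
  by_cases h : t ∈ Icc 0 x <;> simp [h]

lemma dirac_mem_P01 {t : ℝ} (ht : t ∈ Icc (0:ℝ) 1) : Measure.dirac t ∈ P01 := by
  constructor
  · infer_instance
  · rw [Measure.dirac_apply' _ measurableSet_Icc]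
    simp [ht]

def sigmaM (c : ℝ) : Measure ℝ :=
  ENNReal.ofReal c • Measure.dirac 0 + ENNReal.ofReal (1 - c) • Measure.dirac 1

lemma sigmaM_apply {c : ℝ} (hc : c ∈ Icc (0:ℝ) 1) {s : Set ℝ} (hs : MeasurableSet s) :
    sigmaM c s = ENNReal.ofReal c * s.indicator 1 0 + ENNReal.ofReal (1-c) * s.indicator 1 1 := by
  simp [sigmaM, Measure.dirac_apply' _ hs]

lemma sigmaM_mem {c : ℝ} (hc : c ∈ Icc (0:ℝ) 1) : sigmaM c ∈ P01 := by
  obtain ⟨hc0, hc1⟩ := hc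
  have huniv : sigmaM c univ = 1 := by
    rw [sigmaM_apply ⟨hc0, hc1⟩ MeasurableSet.univ]
    simp only [indicator_univ, Pi.one_apply, mul_one]
    rw [← ENNReal.ofReal_add hc0 (by linarith)]
    norm_num
  constructor
  · exact ⟨huniv⟩
  · rw [sigmaM_apply ⟨hc0, hc1⟩ measurableSet_Icc]
    have h0 : (0:ℝ) ∈ Icc (0:ℝ) 1 := by norm_num
    have h1 : (1:ℝ) ∈ Icc (0:ℝ) 1 := by norm_num
    simp only [indicator_of_mem h0, indicator_of_mem h1, Pi.one_apply, mul_one]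
    rw [← ENNReal.ofReal_add hc0 (by linarith)]
    norm_num

lemma cdfI_sigmaM {c : ℝ} (hc : c ∈ Icc (0:ℝ) 1) {x : ℝ} (hx : x ∈ Ico (0:ℝ) 1) :
    cdfI (sigmaM c) x = c := by
  rw [cdfI, sigmaM_apply hc measurableSet_Icc]
  have h0 : (0:ℝ) ∈ Icc (0:ℝ) x := by exact ⟨le_refl 0, hx.1⟩
  have h1 : (1:ℝ) ∉ Icc (0:ℝ) x := by
    intro h; exact absurd h.2 (not_le.mpr hx.2)
  simp [indicator_of_mem h0, indicator_of_notMem h1, ENNReal.toReal_ofReal hc.1]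

/- ## distance computations -/

lemma dW1I_eq (μ ν : Measure ℝ) :
    dW1I μ ν = ∫ x in Ioc (0:ℝ) 1, |cdfI μ x - cdfI ν x| := by
  rw [dW1I, intervalIntegral.integral_of_le (by norm_num : (0:ℝ) ≤ 1)]

lemma ae_ne (a b c : ℝ) : ∀ᵐ x ∂(volume.restrict (Ioc b c)), x ≠ a := by
  refine ae_restrict_of_ae ?_
  have : volume ({a} : Set ℝ) = 0 := Real.volume_singleton
  exact measure_mono_null (fun x hx => by simpa using hx) this

lemma ae_ne_one : ∀ᵐ x ∂(volume.restrict (Ioc (0:ℝ) 1)), x ≠ (1:ℝ) := ae_ne 1 0 1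

lemma abs_cdfI_sub_integrable (μ ν : Measure ℝ) [IsProbabilityMeasure μ]
    [IsProbabilityMeasure ν] (a b : ℝ) :
    IntegrableOn (fun x => |cdfI μ x - cdfI ν x|) (Ioc a b) := by
  apply integrableOn_of_bounded_Ioc (C := 2)
  · exact ((cdfI_measurable μ).sub (cdfI_measurable ν)).abs
  · intro x _
    rw [abs_abs]
    have h1 := cdfI_abs_le_one μ x
    have h2 := cdfI_abs_le_one ν x
    have := abs_sub (cdfI μ x) (cdfI ν x)
    calc |cdfI μ x - cdfI ν x| ≤ |cdfI μ x| + |cdfI ν x| := abs_sub _ _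
    _ ≤ 2 := by linarith

lemma dist_to_dirac0 {μ : Measure ℝ} (hμ : μ ∈ P01) :
    dW1I μ (Measure.dirac 0) = ∫ x in Ioc (0:ℝ) 1, (1 - cdfI μ x) := by
  have : IsProbabilityMeasure μ := hμ.1
  rw [dW1I_eq]
  apply setIntegral_congr_fun measurableSet_Ioc
  intro x hx
  have h0 : cdfI (Measure.dirac 0) x = 1 := by
    rw [cdfI_dirac]; simp [le_of_lt hx.1]
  simp only [h0, abs_of_nonpos (by linarith [cdfI_le_one μ x] : cdfI μ x - 1 ≤ 0)]
  ring

lemma dist_to_sigma {μ : Measure ℝ} (hμ : μ ∈ P01) {c : ℝ} (hc : c ∈ Icc (0:ℝ) 1) :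
    dW1I μ (sigmaM c) = ∫ x in Ioc (0:ℝ) 1, |cdfI μ x - c| := by
  rw [dW1I_eq]
  apply integral_congr_ae
  filter_upwards [ae_ne_one, ae_restrict_mem measurableSet_Ioc] with x hx1 hx
  rw [cdfI_sigmaM hc ⟨le_of_lt hx.1, lt_of_le_of_ne hx.2 hx1⟩]

lemma split_Ioc01 {f : ℝ → ℝ} (hf : IntegrableOn f (Ioc (0:ℝ) 1)) :
    ∫ x in Ioc (0:ℝ) 1, f x
      = (∫ x in Ioc (0:ℝ) (1/2), f x) + ∫ x in Ioc (1/2:ℝ) 1, f x := by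
  have hunion : Ioc (0:ℝ) (1/2) ∪ Ioc (1/2:ℝ) 1 = Ioc (0:ℝ) 1 :=
    Ioc_union_Ioc_eq_Ioc (by norm_num) (by norm_num)
  have hdisj : Disjoint (Ioc (0:ℝ) (1/2)) (Ioc (1/2:ℝ) 1) := by
    rw [Set.disjoint_left]
    rintro x ⟨_, hx2⟩ ⟨hx3, _⟩
    linarith
  rw [← hunion, setIntegral_union hdisj measurableSet_Ioc
    (hf.mono_set (by rw [← hunion]; exact subset_union_left))
    (hf.mono_set (by rw [← hunion]; exact subset_union_right))]

lemma cdfI_dirac_half_lo {x : ℝ} (hx : x ∈ Ioc (0:ℝ) (1/2)) (hx1 : x ≠ 1/2) :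
    cdfI (Measure.dirac (1/2:ℝ)) x = 0 := by
  rw [cdfI_dirac]
  have : ¬ ((1/2:ℝ) ∈ Icc 0 x) := by
    rintro ⟨_, h⟩
    exact hx1 (le_antisymm hx.2 h)
  rw [if_neg this]

lemma cdfI_dirac_half_hi {x : ℝ} (hx : (1/2:ℝ) ≤ x) :
    cdfI (Measure.dirac (1/2:ℝ)) x = 1 := by
  rw [cdfI_dirac]
  have : ((1/2:ℝ) ∈ Icc 0 x) := ⟨by norm_num, hx⟩
  rw [if_pos this]

lemma ae_ne_half : ∀ᵐ x ∂(volume.restrict (Ioc (0:ℝ) (1/2))), x ≠ (1/2:ℝ) := ae_ne _ _ _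

lemma dist_to_half {μ : Measure ℝ} (hμ : μ ∈ P01) :
    dW1I μ (Measure.dirac (1/2:ℝ))
      = (∫ x in Ioc (0:ℝ) (1/2), cdfI μ x) + ∫ x in Ioc (1/2:ℝ) 1, (1 - cdfI μ x) := by
  have : IsProbabilityMeasure μ := hμ.1
  rw [dW1I_eq, split_Ioc01 (abs_cdfI_sub_integrable μ _ 0 1)]
  congr 1
  · apply integral_congr_ae
    filter_upwards [ae_ne_half, ae_restrict_mem measurableSet_Ioc] with x hx1 hx
    rw [cdfI_dirac_half_lo hx hx1, sub_zero, abs_of_nonneg (cdfI_nonneg μ x)]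
  · apply setIntegral_congr_fun measurableSet_Ioc
    intro x hx
    show |cdfI μ x - cdfI (Measure.dirac (1/2:ℝ)) x| = 1 - cdfI μ x
    rw [cdfI_dirac_half_hi (le_of_lt hx.1),
      abs_of_nonpos (by linarith [cdfI_le_one μ x] : cdfI μ x - 1 ≤ 0)]
    ring

lemma dist_sigma_dirac0 {c : ℝ} (hc : c ∈ Icc (0:ℝ) 1) :
    dW1I (sigmaM c) (Measure.dirac 0) = 1 - c := by
  have hP : IsProbabilityMeasure (sigmaM c) := (sigmaM_mem hc).1
  rw [dist_to_dirac0 (sigmaM_mem hc)]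
  have : ∫ x in Ioc (0:ℝ) 1, (1 - cdfI (sigmaM c) x) = ∫ x in Ioc (0:ℝ) 1, (1-c) := by
    apply integral_congr_ae
    filter_upwards [ae_ne_one, ae_restrict_mem measurableSet_Ioc] with x hx1 hx
    rw [cdfI_sigmaM hc ⟨le_of_lt hx.1, lt_of_le_of_ne hx.2 hx1⟩]
  rw [this, setIntegral_const]
  simp [Real.volume_Ioc]

lemma dist_sigma_half {c : ℝ} (hc : c ∈ Icc (0:ℝ) 1) :
    dW1I (sigmaM c) (Measure.dirac (1/2:ℝ)) = 1/2 := by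
  have hP : IsProbabilityMeasure (sigmaM c) := (sigmaM_mem hc).1
  rw [dist_to_half (sigmaM_mem hc)]
  have h1 : ∫ x in Ioc (0:ℝ) (1/2), cdfI (sigmaM c) x = ∫ x in Ioc (0:ℝ) (1/2), c := by
    apply setIntegral_congr_fun measurableSet_Ioc
    intro x hx
    exact cdfI_sigmaM hc ⟨le_of_lt hx.1, by linarith [hx.2]⟩
  have h2 : ∫ x in Ioc (1/2:ℝ) 1, (1 - cdfI (sigmaM c) x) = ∫ x in Ioc (1/2:ℝ) 1, (1-c) := by
    apply integral_congr_ae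
    filter_upwards [ae_ne 1 (1/2) 1, ae_restrict_mem measurableSet_Ioc] with x hx1 hx
    rw [cdfI_sigmaM hc ⟨by linarith [hx.1], lt_of_le_of_ne hx.2 hx1⟩]
  rw [h1, h2, setIntegral_const, setIntegral_const]
  simp [Real.volume_Ioc]
  norm_num
  ring

/- ## equality case: distance 1/2 from δ_{1/2} forces constant cdf on (0,1) -/

lemma eq_case {ν : Measure ℝ} (hν : ν ∈ P01)
    (h : dW1I ν (Measure.dirac (1/2:ℝ)) = 1/2) :
    ∀ᵐ x ∂(volume.restrict (Ioc (0:ℝ) 1)), cdfI ν x = cdfI ν (1/2) := by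
  have hP : IsProbabilityMeasure ν := hν.1
  set F := cdfI ν with hF
  set c := cdfI ν (1/2) with hc
  have hc0 : 0 ≤ c := cdfI_nonneg ν _
  have hc1 : c ≤ 1 := cdfI_le_one ν _
  have hsplit : (∫ x in Ioc (0:ℝ) (1/2), F x) + ∫ x in Ioc (1/2:ℝ) 1, (1 - F x) = 1/2 := by
    rw [← dist_to_half hν]; exact h
  have hIntF1 : IntegrableOn F (Ioc (0:ℝ) (1/2)) := cdfI_integrableOn ν 0 (1/2)
  have hIntF2 : IntegrableOn F (Ioc (1/2:ℝ) 1) := cdfI_integrableOn ν (1/2) 1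
  have hInt1mF : IntegrableOn (fun x => 1 - F x) (Ioc (1/2:ℝ) 1) :=
    (integrable_const 1).sub hIntF2
  have hA : (∫ x in Ioc (0:ℝ) (1/2), F x) ≤ c/2 := by
    have := setIntegral_mono_on hIntF1 (integrable_const c) measurableSet_Ioc
      (fun x hx => cdfI_mono ν hx.2)
    rwa [setIntegral_const, measureReal_def, Real.volume_Ioc, show (1/2:ℝ) - 0 = 1/2 by norm_num,
      ENNReal.toReal_ofReal (by norm_num : (0:ℝ) ≤ 1/2), smul_eq_mul,
      show (1/2) * c = c/2 by ring] at this
  have hB : (∫ x in Ioc (1/2:ℝ) 1, (1 - F x)) ≤ (1-c)/2 := by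
    have := setIntegral_mono_on hInt1mF (integrable_const (1-c)) measurableSet_Ioc
      (fun x hx => by
        have h' := cdfI_mono ν (le_of_lt hx.1)
        show 1 - F x ≤ 1 - c
        simp only [hF, hc]; linarith)
    rwa [setIntegral_const, measureReal_def, Real.volume_Ioc, show (1:ℝ) - 1/2 = 1/2 by norm_num,
      ENNReal.toReal_ofReal (by norm_num : (0:ℝ) ≤ 1/2), smul_eq_mul,
      show (1/2) * (1-c) = (1-c)/2 by ring] at this
  have hAeq : (∫ x in Ioc (0:ℝ) (1/2), F x) = c/2 := by linarith
  have hBeq : (∫ x in Ioc (1/2:ℝ) 1, (1 - F x)) = (1-c)/2 := by linarith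
  -- left half
  have hzero1 : ∫ x in Ioc (0:ℝ) (1/2), (c - F x) = 0 := by
    rw [integral_sub (integrable_const c) hIntF1, hAeq, setIntegral_const,
      measureReal_def, Real.volume_Ioc]
    norm_num
    ring
  have hae1 : ∀ᵐ x ∂(volume.restrict (Ioc (0:ℝ) (1/2))), c - F x = 0 := by
    have hnn : (0:ℝ→ℝ) ≤ᶠ[ae (volume.restrict (Ioc (0:ℝ) (1/2)))] (fun x => c - F x) := by
      filter_upwards [ae_restrict_mem measurableSet_Ioc] with x hx
      have h' := cdfI_mono ν hx.2
      have : (0:ℝ) ≤ c - cdfI ν x := by simp only [hc]; linarith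
      simpa using this
    have h0 := (integral_eq_zero_iff_of_nonneg_ae hnn ((integrable_const c).sub hIntF1)).mp hzero1
    filter_upwards [h0] with x hx
    simpa using hx
  -- right half
  have hzero2 : ∫ x in Ioc (1/2:ℝ) 1, (F x - c) = 0 := by
    have : ∫ x in Ioc (1/2:ℝ) 1, (F x - c)
        = ∫ x in Ioc (1/2:ℝ) 1, ((1 - c) - (1 - F x)) := by
      apply setIntegral_congr_fun measurableSet_Ioc
      intro x _; ring
    rw [this, integral_sub (integrable_const (1-c)) hInt1mF, hBeq, setIntegral_const,
      measureReal_def, Real.volume_Ioc]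
    norm_num
    ring
  have hae2 : ∀ᵐ x ∂(volume.restrict (Ioc (1/2:ℝ) 1)), F x - c = 0 := by
    have hnn : (0:ℝ→ℝ) ≤ᶠ[ae (volume.restrict (Ioc (1/2:ℝ) 1))] (fun x => F x - c) := by
      filter_upwards [ae_restrict_mem measurableSet_Ioc] with x hx
      have h' := cdfI_mono ν (le_of_lt hx.1)
      have : (0:ℝ) ≤ cdfI ν x - c := by simp only [hc]; linarith
      simpa using this
    have h0 := (integral_eq_zero_iff_of_nonneg_ae hnn (hIntF2.sub (integrable_const c))).mp hzero2
    filter_upwards [h0] with x hx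
    simpa using hx
  -- combine
  have h1 := (ae_restrict_iff' measurableSet_Ioc).mp hae1
  have h2 := (ae_restrict_iff' measurableSet_Ioc).mp hae2
  rw [ae_restrict_iff' measurableSet_Ioc]
  filter_upwards [h1, h2] with x hx1 hx2 hx
  rcases le_or_gt x (1/2) with hle | hlt
  · have := hx1 ⟨hx.1, hle⟩; linarith
  · have := hx2 ⟨hlt, hx.2⟩; linarith

/- ## level set machinery -/

def Lset (F : ℝ → ℝ) (s : ℝ) : Set ℝ := Ioc (0:ℝ) 1 ∩ {x | F x ≤ s}

def qlev (F : ℝ → ℝ) (s : ℝ) : ℝ := (volume (Lset F s)).toReal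

lemma Lset_measurable {F : ℝ → ℝ} (hF : Monotone F) (s : ℝ) :
    MeasurableSet (Lset F s) :=
  measurableSet_Ioc.inter (hF.measurable measurableSet_Iic)

lemma Lset_structure {F : ℝ → ℝ} (hF : Monotone F) (s : ℝ) :
    ∃ b, 0 ≤ b ∧ b ≤ 1 ∧ Ioo (0:ℝ) b ⊆ Lset F s ∧ Lset F s ⊆ Ioc 0 b
      ∧ qlev F s = b := by
  rcases eq_empty_or_nonempty (Lset F s) with hemp | hne
  · refine ⟨0, le_refl 0, by norm_num, by simp, by simp [hemp], by simp [qlev, hemp]⟩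
  · have hbdd : BddAbove (Lset F s) := ⟨1, fun x hx => hx.1.2⟩
    set b := sSup (Lset F s) with hb
    obtain ⟨x0, hx0⟩ := id hne
    have hb1 : b ≤ 1 := csSup_le hne (fun x hx => hx.1.2)
    have hb0 : 0 ≤ b := le_trans (le_of_lt hx0.1.1) (le_csSup hbdd hx0)
    have hsub : Lset F s ⊆ Ioc 0 b := fun x hx => ⟨hx.1.1, le_csSup hbdd hx⟩
    have hsup : Ioo (0:ℝ) b ⊆ Lset F s := by
      intro x hx
      obtain ⟨y, hy, hxy⟩ := exists_lt_of_lt_csSup hne hx.2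
      exact ⟨⟨hx.1, le_trans (le_of_lt hxy) hy.1.2⟩, le_trans (hF (le_of_lt hxy)) hy.2⟩
    have hvol : volume (Lset F s) = ENNReal.ofReal b := by
      have h1 : volume (Ioo (0:ℝ) b) ≤ volume (Lset F s) := measure_mono hsup
      have h2 : volume (Lset F s) ≤ volume (Ioc (0:ℝ) b) := measure_mono hsub
      rw [Real.volume_Ioo, sub_zero] at h1
      rw [Real.volume_Ioc, sub_zero] at h2
      exact le_antisymm h2 h1
    exact ⟨b, hb0, hb1, hsup, hsub, by rw [qlev, hvol, ENNReal.toReal_ofReal hb0]⟩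

lemma qlev_nonneg (F : ℝ → ℝ) (s : ℝ) : 0 ≤ qlev F s := ENNReal.toReal_nonneg

lemma qlev_le_one {F : ℝ → ℝ} (hF : Monotone F) (s : ℝ) : qlev F s ≤ 1 := by
  obtain ⟨b, _, hb1, _, _, hq⟩ := Lset_structure hF s
  rw [hq]; exact hb1

/-- decoding (i): left of `qlev` the function is `≤ s` -/
lemma lt_qlev_imp {F : ℝ → ℝ} (hF : Monotone F) {s x : ℝ}
    (hx0 : 0 < x) (hxq : x < qlev F s) : F x ≤ s := by
  obtain ⟨b, _, _, hsup, _, hq⟩ := Lset_structure hF s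
  rw [hq] at hxq
  exact (hsup ⟨hx0, hxq⟩).2

/-- decoding (ii): right of `qlev` the function is `> s` -/
lemma qlev_lt_imp {F : ℝ → ℝ} (hF : Monotone F) {s x : ℝ}
    (hx : x ∈ Ioc (0:ℝ) 1) (hxq : qlev F s < x) : s < F x := by
  obtain ⟨b, _, _, _, hsub, hq⟩ := Lset_structure hF s
  rw [hq] at hxq
  by_contra hle
  push_neg at hle
  exact absurd (hsub ⟨hx, hle⟩).2 (not_le.mpr hxq)

lemma qlev_right_tendsto {F : ℝ → ℝ} (hF : Monotone F) (s : ℝ) :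
    Filter.Tendsto (fun n : ℕ => qlev F (s + 1/(n+1))) Filter.atTop (nhds (qlev F s)) := by
  have hset : (⋂ n : ℕ, Lset F (s + 1/(n+1))) = Lset F s := by
    ext y
    simp only [mem_iInter, Lset, mem_inter_iff, mem_setOf_eq]
    constructor
    · intro h
      refine ⟨(h 0).1, ?_⟩
      by_contra hy
      push_neg at hy
      obtain ⟨n, hn⟩ := exists_nat_one_div_lt (sub_pos.mpr hy)
      have := (h n).2
      linarith
    · rintro ⟨h0, h1⟩ n
      have : (0:ℝ) < 1/(n+1) := by positivity
      exact ⟨h0, by linarith⟩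
  have hanti : Antitone (fun n : ℕ => Lset F (s + 1/(n+1))) := by
    intro m n hmn x hx
    refine ⟨hx.1, show F x ≤ s + 1/((m:ℝ)+1) from le_trans hx.2 ?_⟩
    have h1 : (0:ℝ) < (m:ℝ) + 1 := by positivity
    have h2 : (m:ℝ) + 1 ≤ (n:ℝ) + 1 := by
      have : (m:ℝ) ≤ n := Nat.cast_le.mpr hmn
      linarith
    have := one_div_le_one_div_of_le h1 h2
    linarith
  have hfin : ∀ n : ℕ, volume (Lset F (s + 1/(n+1))) ≠ ⊤ := by
    intro n
    have : volume (Lset F (s + 1/(n+1))) ≤ volume (Ioc (0:ℝ) 1) :=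
      measure_mono inter_subset_left
    rw [Real.volume_Ioc] at this
    exact ne_top_of_le_ne_top (by simp) this
  have htend := MeasureTheory.tendsto_measure_iInter_atTop
    (s := fun n : ℕ => Lset F (s + 1/(n+1)))
    (fun n => (Lset_measurable hF _).nullMeasurableSet) hanti ⟨0, hfin 0⟩
  rw [hset] at htend
  have hfin0 : volume (Lset F s) ≠ ⊤ := by
    have : volume (Lset F s) ≤ volume (Ioc (0:ℝ) 1) := measure_mono inter_subset_left
    rw [Real.volume_Ioc] at this
    exact ne_top_of_le_ne_top (by simp) this
  have := (ENNReal.tendsto_toReal hfin0).comp htend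
  simpa [qlev, Function.comp_def] using this

/- ## integral bounds via level sets -/

lemma Monotone.integrableOn_Ioc01 {F : ℝ → ℝ} (hF : Monotone F) :
    IntegrableOn F (Ioc (0:ℝ) 1) := by
  apply integrableOn_of_bounded_Ioc (C := max |F 0| |F 1|) hF.measurable
  intro x hx
  exact abs_le_max_abs_abs (hF (le_of_lt hx.1)) (hF hx.2)

lemma abs_sub_lam_integrableOn {F : ℝ → ℝ} (hF : Monotone F) (lam : ℝ) :
    IntegrableOn (fun x => |F x - lam|) (Ioc (0:ℝ) 1) :=
  (hF.integrableOn_Ioc01.sub (integrable_const lam)).abs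

lemma Lset_subset (F : ℝ → ℝ) (t : ℝ) : Lset F t ⊆ Ioc (0:ℝ) 1 :=
  inter_subset_left

lemma step_integral {F : ℝ → ℝ} (hF : Monotone F) (t d : ℝ) :
    ∫ x in Ioc (0:ℝ) 1, ((Lset F t).indicator (fun _ => 2*d) x + (-d))
      = d * (2 * qlev F t - 1) := by
  have hLm := Lset_measurable hF t
  have hind : IntegrableOn ((Lset F t).indicator (fun _ => 2*d)) (Ioc (0:ℝ) 1) := by
    apply integrableOn_of_bounded_Ioc (C := |2*d|) ((measurable_const).indicator hLm)
    intro x _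
    by_cases hx : x ∈ Lset F t
    · simp [hx]
    · simp [hx, abs_nonneg]
  rw [integral_add hind (integrable_const (-d)),
    setIntegral_indicator hLm,
    inter_eq_self_of_subset_right (Lset_subset F t),
    setIntegral_const, setIntegral_const]
  rw [measureReal_def, measureReal_def, Real.volume_Ioc]
  show (volume (Lset F t)).toReal • (2*d) + _ • (-d) = _
  rw [show qlev F t = (volume (Lset F t)).toReal from rfl]
  norm_num
  ring

lemma qlev_integral_bound_lower {F : ℝ → ℝ} (hF : Monotone F) {lam lam' : ℝ}
    (h : lam ≤ lam') :
    (lam' - lam) * (2 * qlev F lam - 1)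
      ≤ (∫ x in Ioc (0:ℝ) 1, |F x - lam'|) - ∫ x in Ioc (0:ℝ) 1, |F x - lam| := by
  have hLm := Lset_measurable hF lam
  have hint1 := abs_sub_lam_integrableOn hF lam'
  have hint2 := abs_sub_lam_integrableOn hF lam
  have hdiff : IntegrableOn (fun x => |F x - lam'| - |F x - lam|) (Ioc (0:ℝ) 1) :=
    hint1.sub hint2
  have hindint : IntegrableOn
      (fun x => (Lset F lam).indicator (fun _ => 2*(lam'-lam)) x + (-(lam'-lam)))
      (Ioc (0:ℝ) 1) := by
    apply Integrable.add _ (integrable_const _)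
    apply integrableOn_of_bounded_Ioc (C := |2*(lam'-lam)|)
      ((measurable_const).indicator hLm)
    intro x _
    by_cases hx : x ∈ Lset F lam
    · simp [hx]
    · simp [hx, abs_nonneg]
  have hmono := setIntegral_mono_on hindint hdiff measurableSet_Ioc ?_
  · rw [step_integral hF lam (lam'-lam)] at hmono
    rwa [integral_sub hint1 hint2] at hmono
  · intro x _
    by_cases hxL : x ∈ Lset F lam
    · have hFx : F x ≤ lam := hxL.2
      have h1 : |F x - lam'| = lam' - F x := by
        rw [abs_of_nonpos (by linarith)]; ring
      have h2 : |F x - lam| = lam - F x := by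
        rw [abs_of_nonpos (by linarith)]; ring
      rw [indicator_of_mem hxL, h1, h2]
      linarith
    · have hgen := abs_sub_abs_le_abs_sub (F x - lam) (F x - lam')
      have heq : |F x - lam - (F x - lam')| = lam' - lam := by
        rw [show F x - lam - (F x - lam') = lam' - lam by ring,
          abs_of_nonneg (by linarith)]
      rw [heq] at hgen
      rw [indicator_of_notMem hxL]
      linarith

lemma qlev_integral_bound_upper {F : ℝ → ℝ} (hF : Monotone F) {lam lam' : ℝ}
    (h : lam ≤ lam') :
    (∫ x in Ioc (0:ℝ) 1, |F x - lam'|) - ∫ x in Ioc (0:ℝ) 1, |F x - lam|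
      ≤ (lam' - lam) * (2 * qlev F lam' - 1) := by
  have hLm := Lset_measurable hF lam'
  have hint1 := abs_sub_lam_integrableOn hF lam'
  have hint2 := abs_sub_lam_integrableOn hF lam
  have hdiff : IntegrableOn (fun x => |F x - lam'| - |F x - lam|) (Ioc (0:ℝ) 1) :=
    hint1.sub hint2
  have hindint : IntegrableOn
      (fun x => (Lset F lam').indicator (fun _ => 2*(lam'-lam)) x + (-(lam'-lam)))
      (Ioc (0:ℝ) 1) := by
    apply Integrable.add _ (integrable_const _)
    apply integrableOn_of_bounded_Ioc (C := |2*(lam'-lam)|)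
      ((measurable_const).indicator hLm)
    intro x _
    by_cases hx : x ∈ Lset F lam'
    · simp [hx]
    · simp [hx, abs_nonneg]
  have hmono := setIntegral_mono_on hdiff hindint measurableSet_Ioc ?_
  · rw [step_integral hF lam' (lam'-lam)] at hmono
    rwa [integral_sub hint1 hint2] at hmono
  · intro x hx
    by_cases hxL : x ∈ Lset F lam'
    · have hgen := abs_sub_abs_le_abs_sub (F x - lam') (F x - lam)
      have heq : |F x - lam' - (F x - lam)| = lam' - lam := by
        rw [show F x - lam' - (F x - lam) = -(lam' - lam) by ring, abs_neg,
          abs_of_nonneg (by linarith)]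
      rw [heq] at hgen
      rw [indicator_of_mem hxL]
      linarith
    · have hFx : lam' < F x := by
        by_contra hle
        push_neg at hle
        exact hxL ⟨hx, hle⟩
      have h1 : |F x - lam'| = F x - lam' := abs_of_nonneg (by linarith)
      have h2 : |F x - lam| = F x - lam := abs_of_nonneg (by linarith)
      rw [indicator_of_notMem hxL, h1, h2]
      linarith

/- ## squeeze: equal distance profiles give equal level sizes -/

lemma qlev_le_of_dist_eq {F G : ℝ → ℝ} (hF : Monotone F) (hG : Monotone G)
    (heq : ∀ lam ∈ Icc (0:ℝ) 1,
      (∫ x in Ioc (0:ℝ) 1, |F x - lam|) = ∫ x in Ioc (0:ℝ) 1, |G x - lam|)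
    {s : ℝ} (hs : s ∈ Ico (0:ℝ) 1) : qlev F s ≤ qlev G s := by
  apply ge_of_tendsto (qlev_right_tendsto hG s)
  obtain ⟨N, hN⟩ := exists_nat_one_div_lt (sub_pos.mpr hs.2)
  filter_upwards [Filter.eventually_ge_atTop N] with n hn
  set ε := 1/((n:ℝ)+1) with hε
  have hε0 : 0 < ε := by positivity
  have hεN : ε ≤ 1/((N:ℝ)+1) := by
    apply one_div_le_one_div_of_le (by positivity)
    have : (N:ℝ) ≤ n := Nat.cast_le.mpr hn
    linarith
  have hse : s + ε ≤ 1 := by linarith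
  have h1 := qlev_integral_bound_lower hF (by linarith : s ≤ s + ε)
  have h2 := qlev_integral_bound_upper hG (by linarith : s ≤ s + ε)
  rw [heq s ⟨hs.1, le_of_lt hs.2⟩] at h1
  rw [heq (s+ε) ⟨by have := hs.1; linarith, hse⟩] at h1
  have hchain : (s + ε - s) * (2 * qlev F s - 1) ≤ (s + ε - s) * (2 * qlev G (s+ε) - 1) :=
    le_trans h1 h2
  have hcoef : s + ε - s = ε := by ring
  rw [hcoef] at hchain
  have hdiv : 2 * qlev F s - 1 ≤ 2 * qlev G (s+ε) - 1 := (mul_le_mul_iff_right₀ hε0).mp hchain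
  linarith

lemma qlev_eq_of_dist_eq {F G : ℝ → ℝ} (hF : Monotone F) (hG : Monotone G)
    (heq : ∀ lam ∈ Icc (0:ℝ) 1,
      (∫ x in Ioc (0:ℝ) 1, |F x - lam|) = ∫ x in Ioc (0:ℝ) 1, |G x - lam|)
    {s : ℝ} (hs : s ∈ Ico (0:ℝ) 1) : qlev F s = qlev G s :=
  le_antisymm (qlev_le_of_dist_eq hF hG heq hs)
    (qlev_le_of_dist_eq hG hF (fun lam hlam => (heq lam hlam).symm) hs)

/- ## decoding: equal level sizes and right continuity give equal cdfs -/

lemma cdf_le_of_qlev_eq {μ ν : Measure ℝ} (hμ : μ ∈ P01) (hν : ν ∈ P01)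
    (hq : ∀ s ∈ Ico (0:ℝ) 1, qlev (cdfI μ) s = qlev (cdfI ν) s)
    {x : ℝ} (hx : x ∈ Ico (0:ℝ) 1) : cdfI ν x ≤ cdfI μ x := by
  have hPμ : IsProbabilityMeasure μ := hμ.1
  have hPν : IsProbabilityMeasure ν := hν.1
  set F := cdfI μ
  set G := cdfI ν
  by_contra hlt
  push_neg at hlt
  -- key: for every y with x < y ≤ 1, F y ≥ G x
  have hkey : ∀ y, x < y → y ≤ 1 → G x ≤ F y := by
    intro y hxy hy1
    by_contra hFy
    push_neg at hFy
    set s := (max (F x) (F y) + G x) / 2 with hs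
    have hmax1 : F x < G x := hlt
    have hmax : max (F x) (F y) < G x := max_lt hlt hFy
    have hs1 : F x < s := by
      have := le_max_left (F x) (F y)
      simp only [hs]; linarith
    have hs2 : F y < s := by
      have := le_max_right (F x) (F y)
      simp only [hs]; linarith
    have hs3 : s < G x := by simp only [hs]; linarith
    have hs0 : 0 ≤ s := le_trans (cdfI_nonneg μ x) (le_of_lt hs1)
    have hslt1 : s < 1 := lt_of_lt_of_le hs3 (cdfI_le_one ν x)
    -- q G s ≤ x  (since G x > s)
    have hqGx : qlev G s ≤ x := by
      by_contra hgt
      push_neg at hgt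
      obtain ⟨z, hz1, hz2⟩ := exists_between hgt
      have hz0 : 0 < z := lt_of_le_of_lt hx.1 hz1
      have hzs := lt_qlev_imp (cdfI_mono ν) hz0 hz2
      have hGx : G x ≤ G z := cdfI_mono ν (le_of_lt hz1)
      linarith
    -- q F s ≥ y would contradict: x < y ≤ 1 and qlev F s = qlev G s ≤ x < y
    have hqFs : qlev F s < y := by
      rw [hq s ⟨hs0, hslt1⟩]
      exact lt_of_le_of_lt hqGx hxy
    have hy0 : y ∈ Ioc (0:ℝ) 1 := ⟨lt_of_le_of_lt hx.1 hxy, hy1⟩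
    have := qlev_lt_imp (cdfI_mono μ) hy0 hqFs
    linarith
  -- right continuity of F at x contradicts
  have htend := cdfI_tendsto_right μ x
  have hub : G x ≤ F x := by
    apply ge_of_tendsto htend
    obtain ⟨N, hN⟩ := exists_nat_one_div_lt (sub_pos.mpr hx.2)
    filter_upwards [Filter.eventually_ge_atTop N] with n hn
    have hε0 : (0:ℝ) < 1/((n:ℝ)+1) := by positivity
    have hεN : 1/((n:ℝ)+1) ≤ 1/((N:ℝ)+1) := by
      apply one_div_le_one_div_of_le (by positivity)
      have : (N:ℝ) ≤ n := Nat.cast_le.mpr hn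
      linarith
    exact hkey _ (by linarith) (by linarith)
  linarith

lemma cdf_eq_of_qlev_eq {μ ν : Measure ℝ} (hμ : μ ∈ P01) (hν : ν ∈ P01)
    (hq : ∀ s ∈ Ico (0:ℝ) 1, qlev (cdfI μ) s = qlev (cdfI ν) s)
    {x : ℝ} (hx : x ∈ Ico (0:ℝ) 1) : cdfI μ x = cdfI ν x :=
  le_antisymm
    (cdf_le_of_qlev_eq hν hμ (fun s hs => (hq s hs).symm) hx)
    (cdf_le_of_qlev_eq hμ hν hq hx)

/- ## measure-level helpers -/

lemma compl_null {μ : Measure ℝ} (hμ : μ ∈ P01) : μ ((Icc (0:ℝ) 1)ᶜ) = 0 := by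
  have hP : IsProbabilityMeasure μ := hμ.1
  rw [measure_compl measurableSet_Icc (measure_ne_top μ _), hμ.2, measure_univ]
  simp

lemma Iic_null {μ : Measure ℝ} (hμ : μ ∈ P01) {a : ℝ} (ha : a < 0) : μ (Iic a) = 0 := by
  apply measure_mono_null _ (compl_null hμ)
  intro x hx
  simp only [mem_compl_iff, mem_Icc, not_and_or, not_le]
  left
  exact lt_of_le_of_lt hx ha

lemma Iic_eq_Icc {μ : Measure ℝ} (hμ : μ ∈ P01) {a : ℝ} (ha : 0 ≤ a) :
    μ (Iic a) = μ (Icc 0 a) := by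
  have hIio : μ (Iio (0:ℝ)) = 0 := by
    apply measure_mono_null _ (compl_null hμ)
    intro x hx
    simp only [mem_compl_iff, mem_Icc, not_and_or, not_le]
    left
    exact hx
  apply le_antisymm
  · calc μ (Iic a) ≤ μ (Iio 0 ∪ Icc 0 a) := by
          apply measure_mono
          intro x hx
          rcases lt_or_ge x 0 with h | h
          · exact Or.inl h
          · exact Or.inr ⟨h, hx⟩
    _ ≤ μ (Iio 0) + μ (Icc 0 a) := measure_union_le _ _
    _ = μ (Icc 0 a) := by rw [hIio, zero_add]
  · exact measure_mono (fun x hx => hx.2)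

/- ## pinning the vertical chain -/

lemma phi_sigma_cdf (φ : Measure ℝ → Measure ℝ)
    (hmaps : Set.MapsTo φ P01 P01)
    (hiso : ∀ μ ∈ P01, ∀ ν ∈ P01, dW1I (φ μ) (φ ν) = dW1I μ ν)
    (h0 : φ (Measure.dirac 0) = Measure.dirac 0)
    (hhalf : φ (Measure.dirac (1/2 : ℝ)) = Measure.dirac (1/2 : ℝ))
    {c : ℝ} (hc : c ∈ Icc (0:ℝ) 1) :
    ∀ᵐ x ∂(volume.restrict (Ioc (0:ℝ) 1)), cdfI (φ (sigmaM c)) x = c := by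
  have hσ := sigmaM_mem hc
  have hφσ := hmaps hσ
  have hδh := dirac_mem_P01 (show (1/2:ℝ) ∈ Icc (0:ℝ) 1 by constructor <;> norm_num)
  have hδ0 := dirac_mem_P01 (show (0:ℝ) ∈ Icc (0:ℝ) 1 by constructor <;> norm_num)
  have hPφσ : IsProbabilityMeasure (φ (sigmaM c)) := hφσ.1
  have hd : dW1I (φ (sigmaM c)) (Measure.dirac (1/2:ℝ)) = 1/2 := by
    have h := hiso (sigmaM c) hσ (Measure.dirac (1/2:ℝ)) hδh
    rw [hhalf] at h
    rw [h, dist_sigma_half hc]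
  have hae := eq_case hφσ hd
  set c0 := cdfI (φ (sigmaM c)) (1/2) with hc0
  have hmean : dW1I (φ (sigmaM c)) (Measure.dirac 0) = 1 - c := by
    have h := hiso (sigmaM c) hσ (Measure.dirac 0) hδ0
    rw [h0] at h
    rw [h, dist_sigma_dirac0 hc]
  have hcomp : dW1I (φ (sigmaM c)) (Measure.dirac 0) = 1 - c0 := by
    rw [dist_to_dirac0 hφσ]
    have h : ∫ x in Ioc (0:ℝ) 1, (1 - cdfI (φ (sigmaM c)) x)
        = ∫ x in Ioc (0:ℝ) 1, (1 - c0) := by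
      apply integral_congr_ae
      filter_upwards [hae] with x hx
      rw [hx]
    rw [h, setIntegral_const, measureReal_def, Real.volume_Ioc]
    norm_num
  have hcc : c0 = c := by
    rw [hcomp] at hmean
    linarith
  filter_upwards [hae] with x hx
  rw [hx, hcc]

/- ## main theorem -/

/-- Every isometric embedding of `W₁([0,1])` into itself fixing `δ₀` and `δ_{1/2}`
is the identity. -/
theorem isemb_fixing_two_diracs_is_id (φ : Measure ℝ → Measure ℝ)
    (hmaps : Set.MapsTo φ P01 P01)
    (hiso : ∀ μ ∈ P01, ∀ ν ∈ P01, dW1I (φ μ) (φ ν) = dW1I μ ν)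
    (h0 : φ (Measure.dirac 0) = Measure.dirac 0)
    (hhalf : φ (Measure.dirac (1/2 : ℝ)) = Measure.dirac (1/2 : ℝ)) :
    ∀ μ ∈ P01, φ μ = μ := by
  intro μ hμ
  have hφμ := hmaps hμ
  have hPμ : IsProbabilityMeasure μ := hμ.1
  have hPφμ : IsProbabilityMeasure (φ μ) := hφμ.1
  have hprof : ∀ lam ∈ Icc (0:ℝ) 1,
      (∫ x in Ioc (0:ℝ) 1, |cdfI (φ μ) x - lam|)
        = ∫ x in Ioc (0:ℝ) 1, |cdfI μ x - lam| := by
    intro lam hlam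
    have hσ := sigmaM_mem hlam
    have hisoe := hiso μ hμ (sigmaM lam) hσ
    have hL : dW1I (φ μ) (φ (sigmaM lam))
        = ∫ x in Ioc (0:ℝ) 1, |cdfI (φ μ) x - lam| := by
      rw [dW1I_eq]
      apply integral_congr_ae
      filter_upwards [phi_sigma_cdf φ hmaps hiso h0 hhalf hlam] with x hx
      rw [hx]
    rw [hL, dist_to_sigma hμ hlam] at hisoe
    exact hisoe
  have hq : ∀ s ∈ Ico (0:ℝ) 1, qlev (cdfI (φ μ)) s = qlev (cdfI μ) s :=
    fun s hs => qlev_eq_of_dist_eq (cdfI_mono (φ μ)) (cdfI_mono μ) hprof hs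
  have hcdf : ∀ x ∈ Ico (0:ℝ) 1, cdfI (φ μ) x = cdfI μ x :=
    fun x hx => cdf_eq_of_qlev_eq hφμ hμ hq hx
  apply Measure.ext_of_Iic (φ μ) μ
  intro a
  rcases lt_or_ge a 0 with ha | ha
  · rw [Iic_null hφμ ha, Iic_null hμ ha]
  · have key : cdfI (φ μ) a = cdfI μ a := by
      rcases lt_or_ge a 1 with ha1 | ha1
      · exact hcdf a ⟨ha, ha1⟩
      · rw [cdfI_one_of_ge hφμ ha1, cdfI_one_of_ge hμ ha1]
    have hIcc : φ μ (Icc 0 a) = μ (Icc 0 a) :=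
      (ENNReal.toReal_eq_toReal_iff' (measure_ne_top _ _) (measure_ne_top _ _)).mp key
    rw [Iic_eq_Icc hφμ ha, Iic_eq_Icc hμ ha, hIcc]
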